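/- Let M be a commutative binoid and a ∈ M. The unique homomorphism M^sl → (M/(a ∼ 1))^sl induced by the canonical quotient map q₂ : M → M/(a ∼ 1) (the unique map making the square with the two booleanization maps commute) is an isomorphism if and only if a is invertible. -/

import Mathlib

/-- The smallest monoid congruence identifying `a` with `1`; its quotient is `M/(a ∼ 1)`. -/
def aCon {M : Type*} [CommMonoidWithZero M] (a : M) : Con M :=
  conGen fun x y => x = a ∧ y = 1
/-- The booleanization congruence: the smallest monoid congruence identifying every `m`
with `m * m`; its quotient is `M^sl`. -/
def slCon (M : Type*) [Mul M] : Con M := conGen fun x y => y = x * x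

/-- The congruence relating two elements iff they are simultaneously units or non-units. -/
def unitCon (M : Type*) [CommMonoid M] : Con M where
  r x y := IsUnit x ↔ IsUnit y
  iseqv := ⟨fun _ => Iff.rfl, Iff.symm, Iff.trans⟩
  mul' {w x y z} h1 h2 := by
    show IsUnit (w * y) ↔ IsUnit (x * z)
    rw [(Commute.all w y).isUnit_mul_iff, (Commute.all x z).isUnit_mul_iff]
    exact and_congr h1 h2

lemma slCon_le_unitCon (M : Type*) [CommMonoid M] : slCon M ≤ unitCon M :=
  Con.conGen_le.2 fun x y hxy => by
    subst hxy
    show IsUnit x ↔ IsUnit (x * x)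
    rw [(Commute.all _ _).isUnit_mul_iff, and_self]

lemma isUnit_of_slCon {M : Type*} [CommMonoid M] {a : M} (h : slCon M a 1) : IsUnit a := by
  exact (slCon_le_unitCon M h).mpr isUnit_one

lemma slCon_of_isUnit {M : Type*} [CommMonoid M] {a : M} (h : IsUnit a) : slCon M a 1 := by
  obtain ⟨u, rfl⟩ := h
  have h1 : slCon M (u : M) ((u : M) * u) := ConGen.Rel.of _ _ rfl
  have h2 : slCon M ((u⁻¹ : Mˣ) * (u : M)) ((u⁻¹ : Mˣ) * ((u : M) * u)) :=
    (slCon M).mul ((slCon M).refl _) h1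
  rw [← mul_assoc] at h2
  simp only [Units.inv_mul, one_mul] at h2
  exact (slCon M).symm h2

/-- The unique homomorphism `M^sl → (M/(a ∼ 1))^sl` induced by the canonical
quotient map `q₂ : M → M/(a ∼ 1)` (the unique map making the square with the two
booleanization maps commute) is an isomorphism if and only if `a` is invertible. -/
theorem sl_quot_one_iso_iff_isUnit {M : Type*} [CommMonoidWithZero M] (a : M)
    (f : (slCon M).Quotient →* (slCon (aCon a).Quotient).Quotient)
    (hf : ∀ m : M,
      f ((slCon M).mk' m) = (slCon (aCon a).Quotient).mk' ((aCon a).mk' m)) :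
    Function.Bijective f ↔ IsUnit a := by
  constructor
  · intro hbij
    -- a is identified with 1 in M/(a∼1), hence f maps mk a and mk 1 to the same element
    have ha1 : (aCon a) a 1 := ConGen.Rel.of _ _ ⟨rfl, rfl⟩
    have hmk : (aCon a).mk' a = (aCon a).mk' 1 := Con.eq _ |>.mpr ha1
    have : f ((slCon M).mk' a) = f ((slCon M).mk' 1) := by
      rw [hf, hf, hmk]
    have h2 : (slCon M).mk' a = (slCon M).mk' 1 := hbij.injective this
    exact isUnit_of_slCon ((Con.eq _).mp h2)
  · intro ha
    have hsl : slCon M a 1 := slCon_of_isUnit ha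
    -- build the inverse map
    have hker1 : aCon a ≤ Con.ker (slCon M).mk' := by
      refine Con.conGen_le.2 fun x y hxy => ?_
      show (slCon M).mk' x = (slCon M).mk' y
      rw [hxy.1, hxy.2]
      exact (Con.eq _).mpr hsl
    set h₁ : (aCon a).Quotient →* (slCon M).Quotient := Con.lift _ (slCon M).mk' hker1 with hh₁
    have hker2 : slCon (aCon a).Quotient ≤ Con.ker h₁ := by
      refine Con.conGen_le.2 fun q r hqr => ?_
      subst hqr
      show h₁ q = h₁ (q * q)
      induction q using Con.induction_on with
      | H x =>
        have : ((x : (aCon a).Quotient) * x) = ((x * x : M) : (aCon a).Quotient) := rfl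
        rw [this]
        show (slCon M).mk' x = (slCon M).mk' (x * x)
        exact (Con.eq _).mpr (ConGen.Rel.of _ _ rfl)
    set g : (slCon (aCon a).Quotient).Quotient →* (slCon M).Quotient :=
      Con.lift _ h₁ hker2 with hg
    have hgf : ∀ x, g (f x) = x := by
      intro x
      induction x using Con.induction_on with
      | H m =>
        have : ((m : (slCon M).Quotient)) = (slCon M).mk' m := rfl
        rw [this, hf]
        exact Con.lift_mk' _ _
    have hfg : ∀ y, f (g y) = y := by
      intro y
      induction y using Con.induction_on with
      | H q =>
        induction q using Con.induction_on with
        | H m =>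
          have h1 : ((↑(↑m : (aCon a).Quotient)) : (slCon (aCon a).Quotient).Quotient)
              = (slCon (aCon a).Quotient).mk' ((aCon a).mk' m) := rfl
          rw [h1, Con.lift_mk', Con.lift_mk']
          exact hf m
    exact ⟨Function.LeftInverse.injective hgf, Function.RightInverse.surjective hfg⟩
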